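/- Given the jump relations f_n = f_{n+1} − f_{n−1} for n ∈ J_x = {−N, 2−N, …, N} together with the sum constraint Σ_{k∈J_c} f_k = 0, the linear system uniquely determines the control vector (f_k)_{k∈J_c} ∈ ℝ^{N+2} from the jump vector (f_n)_{n∈J_x} ∈ ℝ^{N+1}; equivalently, the (N+2)×(N+2) coefficient matrix F of this system is invertible. -/

import Mathlib

/-- The jump relations together with the zero-sum constraint uniquely determine
the `N+2` control inputs from the `N+1` jumps (i.e. the coefficient matrix is
invertible). -/
theorem control_jump_system_unique_solution
    (N : ℕ) (hN : 1 ≤ N) (j : Fin (N + 1) → ℝ) :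
    ∃! fc : Fin (N + 2) → ℝ,
      (∀ n : Fin (N + 1), fc n.succ - fc n.castSucc = j n) ∧
      (∑ k, fc k = 0) := by
  set g : ℕ → ℝ := fun i => if h : i < N + 1 then j ⟨i, h⟩ else 0 with hg
  set S : ℕ → ℝ := fun k => ∑ i ∈ Finset.range k, g i with hS
  set c : ℝ := -(∑ k : Fin (N + 2), S k.val) / (N + 2) with hc
  have hcard : ((N : ℝ) + 2) ≠ 0 := by positivity
  have hcsum : ((N : ℝ) + 2) * c + (∑ k : Fin (N + 2), S k.val) = 0 := by
    rw [hc]; field_simp; ring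
  refine ⟨fun k => c + S k.val, ⟨?_, ?_⟩, ?_⟩
  · intro n
    have h1 : ((n.succ : Fin (N + 2)) : ℕ) = n.val + 1 := rfl
    have h2 : ((n.castSucc : Fin (N + 2)) : ℕ) = n.val := rfl
    have h3 : S (n.val + 1) = S n.val + g n.val := by
      simp [hS, Finset.sum_range_succ]
    have h4 : g n.val = j n := by
      rw [hg]; exact dif_pos n.isLt
    simp only [h1, h2, h3, h4]
    ring
  · have : ∑ k : Fin (N + 2), (c + S k.val) =
        ((N : ℝ) + 2) * c + ∑ k : Fin (N + 2), S k.val := by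
      rw [Finset.sum_add_distrib, Finset.sum_const, Finset.card_univ,
        Fintype.card_fin, nsmul_eq_mul]
      push_cast; ring
    rw [this, hcsum]
  · rintro fc ⟨hjump, hsum⟩
    have key : ∀ m (hm : m < N + 2), fc ⟨m, hm⟩ = fc 0 + S m := by
      intro m
      induction m with
      | zero => intro hm; simp [hS]
      | succ m ih =>
        intro hm
        have hm' : m < N + 1 := Nat.lt_of_succ_lt_succ hm
        have hj := hjump ⟨m, hm'⟩
        have h1 : (Fin.succ ⟨m, hm'⟩ : Fin (N + 2)) = ⟨m + 1, hm⟩ := rfl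
        have h2 : (Fin.castSucc ⟨m, hm'⟩ : Fin (N + 2)) =
            ⟨m, Nat.lt_of_succ_lt hm⟩ := rfl
        rw [h1, h2] at hj
        have h3 : S (m + 1) = S m + g m := by simp [hS, Finset.sum_range_succ]
        have h4 : g m = j ⟨m, hm'⟩ := by rw [hg]; exact dif_pos hm'
        have := ih (Nat.lt_of_succ_lt hm)
        rw [h3, h4]
        linarith [hj, this]
    have keyk : ∀ k : Fin (N + 2), fc k = fc 0 + S k.val := by
      intro k; have := key k.val k.isLt; simpa using this
    have hsum' : ((N : ℝ) + 2) * fc 0 + (∑ k : Fin (N + 2), S k.val) = 0 := by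
      have : ∑ k : Fin (N + 2), fc k =
          ((N : ℝ) + 2) * fc 0 + ∑ k : Fin (N + 2), S k.val := by
        rw [Finset.sum_congr rfl (fun k _ => keyk k), Finset.sum_add_distrib,
          Finset.sum_const, Finset.card_univ, Fintype.card_fin, nsmul_eq_mul]
        push_cast; ring
      rw [← this, hsum]
    have h0 : fc 0 = c := by
      have h : fc 0 * ((N : ℝ) + 2) = c * ((N : ℝ) + 2) := by
        linarith [hcsum, hsum']
      exact mul_right_cancel₀ hcard h
    funext k
    rw [keyk k, h0]
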